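/- arXiv:1410.5152 — 6 statements merged into one kernel-verified Lean document; each statement's English description precedes it below -/
import Mathlib

section
/- Fix V and a preference aggregation function F. If the fixed point rule C_F satisfies Group Stability or Anonymity, then every election (V,F,S) with 1 < |S| < |V| satisfies Non-Dictatorship (i.e., there is no voter s ∈ S such that F(Π_S) = π_s for all profiles Π_S). -/
/-- A preference (linear order) on `V`, given as a ranking bijection; `u ≻_π v` iff `π u < π v`. -/
abbrev Pref (V : Type*) [Fintype V] : Type _ := V ≃ Fin (Fintype.card V)

variable {V : Type*} [Fintype V] [DecidableEq V]

/-- `S` is a community of `(V, P)` with respect to the aggregation function `F`. -/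
def CommF (F : (S : Finset V) → (↥S → Pref V) → V → ℕ)
    (P : V → Pref V) (S : Finset V) : Prop :=
  S.Nonempty ∧ ∀ u ∈ S, ∀ v ∉ S, F S (fun s => P s.1) u < F S (fun s => P s.1) v

/-- Group stability of a subset `S` with respect to a profile `P`: no nonempty proper
subgroup `G ⊊ S` can be replaced by an equal-size `G' ⊆ V − S` such that every remaining
member `s ∈ S − G` lexicographically prefers `G'` over `G` via a bijection `f_s`. -/
def GroupStable (P : V → Pref V) (S : Finset V) : Prop :=
  ∀ G : Finset V, G ⊂ S → G.Nonempty → ∀ G' : Finset V, (∀ x ∈ G', x ∉ S) →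
    G'.card = G.card →
    ∀ f : ↥(S \ G) → ↥G → ↥G', (∀ s, Function.Bijective (f s)) →
      ∃ s : ↥(S \ G), ∃ u : ↥G, P s.1 u.1 < P s.1 (f s u).1

/-- Anonymity of the fixed point rule `C_F`: relabeling members by a permutation `σ`
(acting on the indexing of the preferences and on the candidates) maps communities
to communities. -/
def AnonF (F : (S : Finset V) → (↥S → Pref V) → V → ℕ) : Prop :=
  ∀ (P : V → Pref V) (σ : Equiv.Perm V) (S : Finset V),
    CommF F P S ↔ CommF F (fun s => ((σ.symm : V ≃ V).trans (P (σ.symm s)))) (S.image σ)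

lemma exists_pref_lt (a b : V) (hab : a ≠ b) : ∃ e : Pref V, e a < e b := by
  classical
  set e0 : Pref V := Fintype.equivFin V with he0
  by_cases h : e0 a < e0 b
  · exact ⟨e0, h⟩
  · refine ⟨(Equiv.swap a b).trans e0, ?_⟩
    have hne : e0 a ≠ e0 b := fun hc => hab (e0.injective hc)
    have hlt : e0 b < e0 a := lt_of_le_of_ne (not_lt.mp h) hne.symm
    simpa [Equiv.trans_apply, Equiv.swap_apply_left, Equiv.swap_apply_right] using hlt

lemma exists_pref_first (S : Finset V) : ∃ e : Pref V, ∀ u ∈ S, ∀ v ∉ S, e u < e v := by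
  classical
  have hcard : Fintype.card {x // x ∈ S} + Fintype.card {x // x ∉ S} = Fintype.card V := by
    rw [← Fintype.card_sum]; exact Fintype.card_congr (Equiv.sumCompl (· ∈ S))
  refine ⟨((Equiv.sumCompl (· ∈ S)).symm.trans
      ((Fintype.equivFin _).sumCongr (Fintype.equivFin _))).trans
      (finSumFinEquiv.trans (finCongr hcard)), ?_⟩
  intro u hu v hv
  simp only [Equiv.trans_apply, Equiv.sumCompl_symm_apply_of_pos (p := (· ∈ S)) hu,
    Equiv.sumCompl_symm_apply_of_neg (p := (· ∈ S)) hv, Equiv.sumCongr_apply, Sum.map_inl, Sum.map_inr,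
    finSumFinEquiv_apply_left, finSumFinEquiv_apply_right, finCongr_apply]
  rw [Fin.lt_def]
  simp only [Fin.coe_cast, Fin.coe_castAdd, Fin.coe_natAdd]
  exact lt_of_lt_of_le (Fin.is_lt _) (Nat.le_add_right _ _)

/-- if the fixed point rule `C_F` satisfies Group Stability or Anonymity, then
every election `(V, F, S)` with `1 < |S| < |V|` satisfies Non-Dictatorship: there is no voter
`s ∈ S` such that for every profile `P_S`, the aggregate `F(P_S)` coincides (as an ordering
of `V`) with `π_s`. -/
theorem stmt_4 (F : (S : Finset V) → (↥S → Pref V) → V → ℕ)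
    (h : (∀ (P : V → Pref V) (S : Finset V), CommF F P S → GroupStable P S) ∨ AnonF F)
    (S : Finset V) (h1 : 1 < S.card) (h2 : S.card < Fintype.card V) :
    ¬ ∃ s : ↥S, ∀ PS : ↥S → Pref V, ∀ u v : V,
        (F S PS u < F S PS v ↔ PS s u < PS s v) := by
  classical
  rintro ⟨s, hs⟩
  obtain ⟨t, ht, hts⟩ := Finset.exists_mem_ne h1 s.1
  obtain ⟨w, hw⟩ : ∃ w, w ∉ S := by
    by_contra h'
    push_neg at h'
    have : S = Finset.univ := Finset.eq_univ_iff_forall.mpr h'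
    rw [this, Finset.card_univ] at h2
    exact lt_irrefl _ h2
  obtain ⟨eS, heS⟩ := exists_pref_first S
  have hSne : S.Nonempty := ⟨s.1, s.2⟩
  rcases h with hGS | hA
  · -- Group stability case
    have hws : w ≠ s.1 := fun hc => hw (hc ▸ s.2)
    obtain ⟨ews, hews⟩ := exists_pref_lt w s.1 hws
    set P : V → Pref V := fun v => if v = s.1 then eS else ews with hP
    have hPs : P s.1 = eS := by simp [hP]
    have hcomm : CommF F P S := by
      refine ⟨hSne, fun u hu v hv => ?_⟩
      rw [hs (fun x => P x.1) u v, hPs]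
      exact heS u hu v hv
    have hsub : ({s.1} : Finset V) ⊂ S := by
      rw [Finset.ssubset_iff_of_subset (Finset.singleton_subset_iff.mpr s.2)]
      exact ⟨t, ht, by simp [hts]⟩
    have hG'card : ({w} : Finset V).card = ({s.1} : Finset V).card := by simp
    have hG'sub : ∀ x ∈ ({w} : Finset V), x ∉ S := by
      intro x hx; rw [Finset.mem_singleton] at hx; exact hx ▸ hw
    set f : ↥(S \ {s.1}) → ↥({s.1} : Finset V) → ↥({w} : Finset V) :=
      fun _ _ => ⟨w, Finset.mem_singleton_self w⟩ with hf
    have hbij : ∀ r, Function.Bijective (f r) := by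
      intro r
      constructor
      · intro a b _
        exact Subtype.ext ((Finset.mem_singleton.mp a.2).trans (Finset.mem_singleton.mp b.2).symm)
      · intro y
        refine ⟨⟨s.1, Finset.mem_singleton_self _⟩, Subtype.ext ?_⟩
        simp [hf, (Finset.mem_singleton.mp y.2).symm]
    obtain ⟨r, u, hlt⟩ := hGS P S hcomm {s.1} hsub (Finset.singleton_nonempty _) {w} hG'sub
      hG'card f hbij
    have hru : r.1 ≠ s.1 := by
      have := Finset.mem_sdiff.mp r.2
      simpa using this.2
    have hu1 : u.1 = s.1 := Finset.mem_singleton.mp u.2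
    have hPr : P r.1 = ews := by simp [hP, hru]
    rw [hPr, hu1] at hlt
    have : (f r u).1 = w := rfl
    rw [this] at hlt
    exact absurd hews (not_lt.mpr (le_of_lt hlt))
  · -- Anonymity case
    have hwt : w ≠ t := fun hc => hw (hc ▸ ht)
    obtain ⟨ewt, hewt⟩ := exists_pref_lt w t hwt
    set σ : Equiv.Perm V := Equiv.swap s.1 t with hσ
    set P : V → Pref V := fun v => if v = t then ewt else eS with hP
    have hPs : P s.1 = eS := by simp [hP, (Ne.symm hts)]
    have hPt : P t = ewt := by simp [hP]
    have hcomm : CommF F P S := by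
      refine ⟨hSne, fun u hu v hv => ?_⟩
      rw [hs (fun x => P x.1) u v, hPs]
      exact heS u hu v hv
    have himg : S.image σ = S := by
      have hsub2 : S.image σ ⊆ S := by
        intro x hx
        obtain ⟨y, hy, rfl⟩ := Finset.mem_image.mp hx
        rcases eq_or_ne y s.1 with rfl | hys
        · simpa [hσ, Equiv.swap_apply_left] using ht
        · rcases eq_or_ne y t with rfl | hyt
          · simpa [hσ, Equiv.swap_apply_right] using s.2
          · simpa [hσ, Equiv.swap_apply_of_ne_of_ne hys hyt] using hy
      exact Finset.eq_of_subset_of_card_le hsub2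
        (le_of_eq (Finset.card_image_of_injective S σ.injective).symm)
    have hcomm2 := (hA P σ S).mp hcomm
    rw [himg] at hcomm2
    have hkey := hcomm2.2 s.1 s.2 w hw
    rw [hs (fun x => ((σ.symm : V ≃ V).trans (P (σ.symm x.1))))] at hkey
    have hσs : σ.symm s.1 = t := by simp [hσ, Equiv.symm_swap, Equiv.swap_apply_left]
    have hσw : σ.symm w = w := by
      rw [hσ, Equiv.symm_swap]
      exact Equiv.swap_apply_of_ne_of_ne (fun hc => hw (hc ▸ s.2)) hwt
    simp only [Equiv.trans_apply, hσs, hσw, hPt] at hkey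
    exact absurd hewt (not_lt.mpr (le_of_lt hkey))
end

section
/- If a community rule satisfies the Group Stability and Self-Approval axioms then it satisfies Pareto Efficiency: for any community S and any u ∈ S, v ∉ S, there exists s ∈ S with u ≻_{π_s} v. -/
variable {V : Type*} [Fintype V] [DecidableEq V]

/-- Self-approval of `S` w.r.t. profile `P`: for every `G' ⊆ V − S` with `|G'| = |S|` and
every family of bijections `(f_s : S → G')_{s ∈ S}`, some `s, u ∈ S` satisfy
`u ≻_{π_s} f_s(u)`. -/
def SelfApprove (P : V → Pref V) (S : Finset V) : Prop :=
  ∀ G' : Finset V, (∀ x ∈ G', x ∉ S) → G'.card = S.card →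
    ∀ f : ↥S → ↥S → ↥G', (∀ s, Function.Bijective (f s)) →
      ∃ s u : ↥S, P s.1 u.1 < P s.1 (f s u).1

/-- a community rule satisfying the Group Stability and Self-Approval axioms
satisfies Pareto Efficiency: for every community `S`, all `u ∈ S` and `v ∉ S`, some member
`s ∈ S` prefers `u` over `v`. -/
theorem stmt_8 (C : (V → Pref V) → Finset V → Prop)
    (hGS : ∀ (P : V → Pref V) (S : Finset V), C P S → GroupStable P S)
    (hSA : ∀ (P : V → Pref V) (S : Finset V), C P S → SelfApprove P S) :
    ∀ (P : V → Pref V) (S : Finset V), C P S →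
      ∀ u ∈ S, ∀ v ∉ S, ∃ s ∈ S, P s u < P s v := by
  intro P S hC u hu v hv
  by_cases hsub : ({u} : Finset V) ⊂ S
  · -- use group stability with G = {u}, G' = {v}
    have hGS' := hGS P S hC {u} hsub ⟨u, Finset.mem_singleton_self u⟩ {v}
      (by intro x hx; rw [Finset.mem_singleton] at hx; subst hx; exact hv) rfl
      (fun _ _ => ⟨v, Finset.mem_singleton_self v⟩)
      (by
        intro s
        constructor
        · intro a b _
          exact Subtype.ext (by
            have ha := a.2; have hb := b.2
            rw [Finset.mem_singleton] at ha hb; rw [ha, hb])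
        · intro c
          refine ⟨⟨u, Finset.mem_singleton_self u⟩, ?_⟩
          exact Subtype.ext (by
            have hc := c.2; rw [Finset.mem_singleton] at hc; exact hc.symm))
    obtain ⟨s, w, hlt⟩ := hGS'
    have hsS : s.1 ∈ S := (Finset.mem_sdiff.mp s.2).1
    have hw : w.1 = u := Finset.mem_singleton.mp w.2
    exact ⟨s.1, hsS, by simpa [hw] using hlt⟩
  · -- S = {u}
    have hSeq : S = {u} := by
      have hsub' : ({u} : Finset V) ⊆ S := Finset.singleton_subset_iff.mpr hu
      rcases (Finset.ssubset_iff_of_subset hsub').mpr.mt hsub with h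
      push_neg at h
      exact Finset.Subset.antisymm (fun x hx => Finset.mem_singleton.mpr ((Finset.mem_singleton.mp (h x hx)))) hsub'
    subst hSeq
    have hSA' := hSA P {u} hC {v}
      (by intro x hx; rw [Finset.mem_singleton] at hx; subst hx; exact hv) rfl
      (fun _ _ => ⟨v, Finset.mem_singleton_self v⟩)
      (by
        intro s
        constructor
        · intro a b _
          exact Subtype.ext (by
            have ha := a.2; have hb := b.2
            rw [Finset.mem_singleton] at ha hb; rw [ha, hb])
        · intro c
          refine ⟨⟨u, Finset.mem_singleton_self u⟩, ?_⟩
          exact Subtype.ext (by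
            have hc := c.2; rw [Finset.mem_singleton] at hc; exact hc.symm))
    obtain ⟨s, w, hlt⟩ := hSA'
    have hw : w.1 = u := Finset.mem_singleton.mp w.2
    exact ⟨s.1, s.2, by simpa [hw] using hlt⟩
end

section
/- The harmonious community rule satisfies Weak Group Stability: if S is a harmonious community of (V,Π), then for all G ⊆ S and G' ⊆ V−S with 0 < |G| = |G'| ≤ |S|/2 and every bijection f : G → G', there exist s ∈ S−G and u ∈ G with u ≻_{π_s} f(u). -/
/-- `S` is a harmonious community of `(V, P)`: for all `u ∈ S`, `v ∉ S`, a strict majority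
of the preferences `{π_s : s ∈ S}` prefer `u` over `v`. -/
def Harm {V : Type*} [Fintype V] [DecidableEq V]
    (P : V → Pref V) (S : Finset V) : Prop :=
  ∀ u ∈ S, ∀ v ∉ S, S.card < 2 * (S.filter fun s => P s u < P s v).card

/-- the harmonious rule satisfies Weak Group Stability: if `S` is a
harmonious community of `(V, P)`, then for all `G ⊆ S` and `G' ⊆ V − S` with
`0 < |G| = |G'| ≤ |S| / 2` and every (global) bijection `f : G → G'`, there exist
`s ∈ S − G` and `u ∈ G` with `u ≻_{π_s} f(u)`. -/
theorem stmt_14 {V : Type*} [Fintype V] [DecidableEq V]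
    (P : V → Pref V) (S : Finset V) (hS : Harm P S) :
    ∀ G : Finset V, G ⊆ S → G.Nonempty → ∀ G' : Finset V, (∀ x ∈ G', x ∉ S) →
      G'.card = G.card → 2 * G.card ≤ S.card →
      ∀ f : ↥G → ↥G', Function.Bijective f →
        ∃ s ∈ S, s ∉ G ∧ ∃ u : ↥G, P s u.1 < P s (f u).1 := by
  intro G hGS hGne G' hG' hcard hhalf f hf
  by_contra h
  push_neg at h
  obtain ⟨x, hx⟩ := hGne
  set u : ↥G := ⟨x, hx⟩
  have hmaj := hS x (hGS hx) (f u).1 (hG' _ (f u).2)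
  have hsub : (S.filter fun s => P s x < P s (f u).1) ⊆ G := by
    intro s hs
    simp only [Finset.mem_filter] at hs
    by_contra hsG
    exact absurd hs.2 (not_lt.mpr (h s hs.1 hsG u))
  have : S.card < 2 * G.card :=
    lt_of_lt_of_le hmaj (by exact Nat.mul_le_mul_left 2 (Finset.card_le_card hsub))
  omega
end

section
/- For the Clique Rule, if S₁ and S₂ are both communities of a preference network A, then S₁ ∩ S₂ = ∅, or S₁ ⊆ S₂, or S₂ ⊆ S₁. -/
/-- `S` is a community for the Clique Rule: `S` is nonempty and every member of `S` ranks
every member of `S` above every non-member. -/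
def CliqueComm {V : Type*} [Fintype V] [DecidableEq V]
    (P : V → Pref V) (S : Finset V) : Prop :=
  S.Nonempty ∧ ∀ s ∈ S, ∀ u ∈ S, ∀ v ∉ S, P s u < P s v

/-- two communities of the Clique Rule are either disjoint or nested. -/
theorem stmt_15 {V : Type*} [Fintype V] [DecidableEq V]
    (P : V → Pref V) (S₁ S₂ : Finset V)
    (h₁ : CliqueComm P S₁) (h₂ : CliqueComm P S₂) :
    S₁ ∩ S₂ = ∅ ∨ S₁ ⊆ S₂ ∨ S₂ ⊆ S₁ := by
  by_contra h
  push_neg at h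
  obtain ⟨hne, h12, h21⟩ := h
  obtain ⟨s, hs⟩ := hne
  rw [Finset.mem_inter] at hs
  obtain ⟨a, ha1, ha2⟩ := Finset.not_subset.mp h12
  obtain ⟨b, hb2, hb1⟩ := Finset.not_subset.mp h21
  have hab := h₁.2 s hs.1 a ha1 b hb1
  have hba := h₂.2 s hs.2 b hb2 a ha2
  exact absurd (hab.trans hba) (lt_irrefl _)
end

section
/- If S is a δ-strong B3CT community of (V,Π), then S is an (α, α−δ)-B3CT community for α = min_{u∈S} φ_S(u)/|S|; that is, letting β = max_{v∈V−S} φ_S(v)/|S|, one has α − β > δ. -/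
/-- `φ_{T,k}(i)`: the number of members of `T` ranking `i` among their top `k` choices
(0-indexed ranks). -/
def phiT {V : Type*} [Fintype V] [DecidableEq V]
    (P : V → Pref V) (T : Finset V) (k : ℕ) (i : V) : ℕ :=
  (T.filter fun s => ((P s i : Fin (Fintype.card V)) : ℕ) < k).card

/-- if `S` is a `δ`-strong B3CT community of `(V, P)` (i.e. for every
`T ⊆ S` with `|T| ≥ (1−δ)|S|` and all `u ∈ S`, `v ∉ S`, `φ_{T,|S|}(u) > φ_{T,|S|}(v)`),
then with `α = min_{u∈S} φ_S(u) / |S|` and `β = max_{v∉S} φ_S(v) / |S|` one has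
`α − β > δ`, i.e. `S` is an `(α, α−δ)`-B3CT community. -/
theorem stmt_18 {V : Type*} [Fintype V] [DecidableEq V]
    (P : V → Pref V) (S : Finset V) (hSne : S.Nonempty) (hcne : Sᶜ.Nonempty)
    (δ : ℝ) (hδ0 : 0 ≤ δ) (hδ1 : δ ≤ 1)
    (hstrong : ∀ T ⊆ S, (1 - δ) * (S.card : ℝ) ≤ (T.card : ℝ) →
      ∀ u ∈ S, ∀ v ∉ S, phiT P T S.card v < phiT P T S.card u) :
    δ < (((S.image (phiT P S S.card)).min' (hSne.image _) : ℝ)) / (S.card : ℝ)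
        - (((Sᶜ.image (phiT P S S.card)).max' (hcne.image _) : ℝ)) / (S.card : ℝ) := by
  by_contra hcon
  push_neg at hcon
  set n := S.card with hn
  have hn0 : (0:ℝ) < n := by exact_mod_cast Finset.card_pos.mpr hSne
  obtain ⟨u, hu, hum⟩ := Finset.mem_image.mp ((S.image (phiT P S n)).min'_mem (hSne.image _))
  obtain ⟨v, hv, hvM⟩ := Finset.mem_image.mp ((Sᶜ.image (phiT P S n)).max'_mem (hcne.image _))
  have hvS : v ∉ S := by simpa using hv
  set m := phiT P S n u with hm
  set M := phiT P S n v with hM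
  rw [← hum, ← hvM] at hcon
  have hreal : (m:ℝ) - (M:ℝ) ≤ δ * n := by
    rw [div_sub_div_same] at hcon
    exact (div_le_iff₀ hn0).mp hcon
  have hMm : M < m := hstrong S Finset.Subset.rfl (by nlinarith) u hu v hvS
  set A := S.filter (fun s => ((P s u : Fin (Fintype.card V)) : ℕ) < n) with hA
  set B := S.filter (fun s => ((P s v : Fin (Fintype.card V)) : ℕ) < n) with hB
  have hmA : m = A.card := rfl
  have hMB : M = B.card := rfl
  have hAS : A ⊆ S := Finset.filter_subset _ _
  have hBS : B ⊆ S := Finset.filter_subset _ _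
  have hd : m - M ≤ (A \ B).card := by
    have := Finset.le_card_sdiff B A
    omega
  obtain ⟨D, hDsub, hDcard⟩ := Finset.exists_subset_card_eq hd
  have hDA : D ⊆ A := hDsub.trans (Finset.sdiff_subset)
  have hDS : D ⊆ S := hDA.trans hAS
  set T := S \ D with hT
  have hTS : T ⊆ S := Finset.sdiff_subset
  have hTcard : T.card = n - (m - M) := by
    rw [hT, Finset.card_sdiff_of_subset hDS, hDcard]
  have hmn : m ≤ n := by rw [hmA]; exact Finset.card_le_card hAS
  have hTreal : (1 - δ) * (n:ℝ) ≤ (T.card : ℝ) := by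
    have : (T.card : ℝ) = (n:ℝ) - ((m:ℝ) - (M:ℝ)) := by
      rw [hTcard]
      push_cast [Nat.cast_sub (by omega : m - M ≤ n), Nat.cast_sub hMm.le]
      ring
    rw [this]; linarith
  have hphiu : phiT P T n u = M := by
    have heq : T.filter (fun s => ((P s u : Fin (Fintype.card V)) : ℕ) < n) = A \ D := by
      ext x
      simp only [hT, hA, Finset.mem_sdiff, Finset.mem_filter]
      tauto
    have : phiT P T n u = (A \ D).card := by rw [phiT, heq]
    rw [this, Finset.card_sdiff_of_subset hDA, hDcard]
    omega
  have hphiv : phiT P T n v = M := by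
    have hDB : ∀ x ∈ D, x ∉ B := fun x hx => (Finset.mem_sdiff.mp (hDsub hx)).2
    have heq : T.filter (fun s => ((P s v : Fin (Fintype.card V)) : ℕ) < n) = B := by
      ext x
      simp only [hT, hB, Finset.mem_sdiff, Finset.mem_filter]
      constructor
      · rintro ⟨⟨hxS, _⟩, hp⟩; exact ⟨hxS, hp⟩
      · rintro ⟨hxS, hp⟩
        exact ⟨⟨hxS, fun hxD => hDB x hxD (Finset.mem_filter.mpr ⟨hxS, hp⟩)⟩, hp⟩
    rw [phiT, heq, ← hMB]
  have := hstrong T hTS hTreal u hu v hvS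
  rw [hphiu, hphiv] at this
  exact lt_irrefl _ this
end

section
/- If S is a δ-strong harmonious community of (V,Π), then S is a (δ/2)-stable harmonious community; that is, for all u ∈ S and v ∈ V−S, at least a (1/2 + δ/2)-fraction of the orders {π_s : s ∈ S} prefer u over v. -/
/-- if `S` is a `δ`-strong harmonious community of `(V, P)` (for every
`T ⊆ S` with `|T| ≥ (1−δ)|S|` and all `u ∈ S`, `v ∉ S`, a strict majority of
`{π_s : s ∈ T}` prefer `u` over `v`), then `S` is a `(δ/2)`-stable harmonious community:
for all `u ∈ S`, `v ∉ S`, at least a `(1/2 + δ/2)`-fraction of the orders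
`{π_s : s ∈ S}` prefer `u` over `v`. -/
theorem stmt_19 {V : Type*} [Fintype V] [DecidableEq V]
    (P : V → Pref V) (S : Finset V)
    (δ : ℝ) (hδ0 : 0 ≤ δ) (hδ1 : δ ≤ 1)
    (hstrong : ∀ T ⊆ S, (1 - δ) * (S.card : ℝ) ≤ (T.card : ℝ) →
      ∀ u ∈ S, ∀ v ∉ S,
        (T.card : ℝ) < 2 * ((T.filter fun s => P s u < P s v).card : ℝ)) :
    ∀ u ∈ S, ∀ v ∉ S,
      (1 / 2 + δ / 2) * (S.card : ℝ) ≤ ((S.filter fun s => P s u < P s v).card : ℝ) := by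
  intro u hu v hv
  by_contra h
  push_neg at h
  set A : Finset V := S.filter (fun s => P s u < P s v) with hA
  set n := S.card with hn
  set a := A.card with ha
  have hAS : A ⊆ S := Finset.filter_subset _ _
  set B := S \ A with hB
  set b := B.card with hb
  have hab : b = n - a := Finset.card_sdiff_of_subset hAS
  have haln : a ≤ n := Finset.card_le_card hAS
  have habn : a + b = n := by omega
  by_cases hpos : (1 - δ) * (n : ℝ) ≤ 0
  · have := hstrong ∅ (Finset.empty_subset S) (by simpa using hpos) u hu v hv
    simp at this
  push_neg at hpos
  -- 2a < (1+δ)n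
  have h2a : 2 * (a : ℝ) < (1 + δ) * n := by
    have := h
    nlinarith
  have h2b : (1 - δ) * (n : ℝ) < 2 * (b : ℝ) := by
    have : (a : ℝ) + b = n := by exact_mod_cast congrArg (Nat.cast : ℕ → ℝ) habn
    nlinarith
  set t := max b ⌈(1 - δ) * (n : ℝ)⌉₊ with ht
  have htn : t ≤ n := by
    refine max_le (by exact_mod_cast Finset.card_le_card (Finset.sdiff_subset)) ?_
    rw [Nat.ceil_le]
    nlinarith
  have hlt : (1 - δ) * (n : ℝ) ≤ t := by
    calc (1 - δ) * (n : ℝ) ≤ ⌈(1 - δ) * (n : ℝ)⌉₊ := Nat.le_ceil _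
    _ ≤ t := by exact_mod_cast le_max_right _ _
  have ht2b : t ≤ 2 * b := by
    refine max_le (by omega) ?_
    rw [Nat.ceil_le]
    push_cast
    linarith
  obtain ⟨T, hBT, hTS', hTcard⟩ :=
    Finset.exists_subsuperset_card_eq (Finset.sdiff_subset (s := S) (t := A))
      (le_max_left _ _) htn
  have hfilter : (T.filter fun s => P s u < P s v).card = t - b := by
    have : (T.filter fun s => P s u < P s v) = T \ B := by
      ext s
      simp only [Finset.mem_filter, Finset.mem_sdiff, hB, hA, Finset.mem_filter]
      constructor
      · rintro ⟨hsT, hp⟩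
        exact ⟨hsT, fun hm => hm.2 ⟨hm.1, hp⟩⟩
      · rintro ⟨hsT, hns⟩
        have hsS := hTS' hsT
        refine ⟨hsT, ?_⟩
        by_contra hnp
        exact hns ⟨hsS, fun hm => hnp hm.2⟩
    rw [this, Finset.card_sdiff_of_subset hBT, hTcard]
  have hmain := hstrong T hTS' (by rw [hTcard]; exact hlt) u hu v hv
  rw [hfilter, hTcard] at hmain
  have hbt : b ≤ t := le_max_left _ _
  have : ((t - b : ℕ) : ℝ) = (t : ℝ) - b := by
    push_cast [Nat.cast_sub hbt]; ring
  rw [this] at hmain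
  have : (2 * b : ℝ) < t := by linarith
  have : 2 * b < t := by exact_mod_cast this
  omega
end
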